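/- There exists a constant α > 0 such that for every ε > 0 there is an N so that for all n ≥ N and all positive integers k ≤ α · log n / log log n, setting t = ⌊n/k⌋, there exist pairwise edge-disjoint subgraphs G_1, …, G_t of K_{n,n} such that no G_i contains a cycle of length at most 2k, and Σ_{i=1}^{t} |E(G_i)| ≥ (1 − ε) n². -/

import Mathlib

/-- The edge ("window") `{v i, v (i+1), …, v (i+r-1)}` of a tight cycle. -/
def tightWindow {V : Type*} [DecidableEq V] (r : ℕ) {ℓ : ℕ} (v : ZMod ℓ → V)
    (i : ZMod ℓ) : Finset V :=
  Finset.image (fun j : Fin r => v (i + (j : ℕ))) Finset.univ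

/-- `E` contains an `r`-uniform tight cycle of length `ℓ`: distinct vertices
`v 0, …, v (ℓ-1)` all of whose `r`-windows (indices mod `ℓ`) are edges of `E`. -/
def IsTightCycleIn {V : Type*} [DecidableEq V] (r ℓ : ℕ) (E : Set (Finset V)) : Prop :=
  ∃ v : ZMod ℓ → V, Function.Injective v ∧ ∀ i : ZMod ℓ, tightWindow r v i ∈ E

/-- `E` contains an `r`-uniform tight cycle of some length `ℓ > r`. -/
def HasTightCycle {V : Type*} [DecidableEq V] (r : ℕ) (E : Set (Finset V)) : Prop :=
  ∃ ℓ : ℕ, r < ℓ ∧ IsTightCycleIn r ℓ E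

/-- `E` is tight-cycle-free. -/
def TightCycleFree {V : Type*} [DecidableEq V] (r : ℕ) (E : Set (Finset V)) : Prop :=
  ¬ HasTightCycle r E

/-- `f_r(n)`: the maximum number of edges of an `r`-uniform tight-cycle-free
hypergraph on `n` vertices. -/
noncomputable def tightCycleTuran (r n : ℕ) : ℕ :=
  sSup {m | ∃ E : Finset (Finset (Fin n)), (∀ e ∈ E, e.card = r) ∧
    TightCycleFree r (E : Set (Finset (Fin n))) ∧ E.card = m}


namespace GirthDecompAux

open Finset

variable {V : Type*} [DecidableEq V] [Fintype V]

/-- The `j`-th cyclic edge of a tuple `p : Fin m → V`. -/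
def cycEdge {m : ℕ} (p : Fin m → V) (j : Fin m) : Sym2 V :=
  s(p j, p ⟨(j.val + 1) % m, Nat.mod_lt _ j.pos⟩)

lemma succ_mod (m x : ℕ) (hx : x < m) : (x + 1) % m = if x + 1 = m then 0 else x + 1 := by
  split
  · simp [*]
  · exact Nat.mod_eq_of_lt (by omega)

lemma cycEdge_inj {m : ℕ} (hm : 3 ≤ m) {p : Fin m → V} (hp : Function.Injective p) :
    Function.Injective (cycEdge p) := by
  intro a b hab
  simp only [cycEdge, Sym2.eq_iff] at hab
  rcases hab with ⟨h1, _⟩ | ⟨h1, h2⟩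
  · exact hp h1
  · have e1 : a.val = (b.val + 1) % m := congrArg Fin.val (hp h1)
    have e2 : (a.val + 1) % m = b.val := congrArg Fin.val (hp h2)
    have m1 := succ_mod m a.val a.isLt
    have m2 := succ_mod m b.val b.isLt
    have ha := a.isLt
    have hb := b.isLt
    apply Fin.ext
    split at m1 <;> split at m2 <;> omega

/-- The set of "bad" injective cyclic tuples that are monochromatic in colour `i`. -/
def BadSet {t : ℕ} (c : Sym2 V → Fin t) (m : ℕ) (i : Fin t) : Finset (Fin m → V) :=
  Finset.univ.filter (fun p => Function.Injective p ∧ ∀ j, c (cycEdge p j) = i)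

lemma card_prescribed {A β : Type*} [Fintype A] [DecidableEq A] [Fintype β] [DecidableEq β]
    (F : Finset A) (i : β) :
    (Finset.univ.filter (fun c : A → β => ∀ e ∈ F, c e = i)).card
      ≤ Fintype.card β ^ (Fintype.card A - F.card) := by
  classical
  have key : (Finset.univ.filter (fun c : A → β => ∀ e ∈ F, c e = i)).card
      ≤ (Finset.univ : Finset ({a : A // a ∈ Fᶜ} → β)).card := by
    apply Finset.card_le_card_of_injOn (fun c => fun a => c a.1)
    · intro c _; exact Finset.mem_univ _
    · intro c1 h1 c2 h2 h
      simp only [Finset.mem_coe, Finset.mem_filter] at h1 h2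
      funext a
      by_cases ha : a ∈ F
      · rw [h1.2 a ha, h2.2 a ha]
      · exact congrFun h ⟨a, by simpa using ha⟩
  calc _ ≤ _ := key
    _ = Fintype.card β ^ (Fintype.card A - F.card) := by
        rw [Finset.card_univ, Fintype.card_fun]
        congr 1
        rw [Fintype.card_coe, Finset.card_compl]

lemma sum_badset_card {t m : ℕ} (hm : 3 ≤ m) (i : Fin t) :
    ∑ c : Sym2 V → Fin t, (BadSet c m i).card
      ≤ Fintype.card V ^ m * t ^ (Fintype.card (Sym2 V) - m) := by
  classical
  have hcf : ∀ c : Sym2 V → Fin t, (BadSet c m i).card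
      = ∑ p : Fin m → V,
          if Function.Injective p ∧ ∀ j, c (cycEdge p j) = i then 1 else 0 := by
    intro c; rw [BadSet, Finset.card_filter]
  calc ∑ c : Sym2 V → Fin t, (BadSet c m i).card
      = ∑ c : Sym2 V → Fin t, ∑ p : Fin m → V,
          if Function.Injective p ∧ ∀ j, c (cycEdge p j) = i then 1 else 0 := by
        exact Finset.sum_congr rfl fun c _ => hcf c
    _ = ∑ p : Fin m → V, ∑ c : Sym2 V → Fin t,
          if Function.Injective p ∧ ∀ j, c (cycEdge p j) = i then 1 else 0 :=
        Finset.sum_comm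
    _ ≤ ∑ _p : Fin m → V, t ^ (Fintype.card (Sym2 V) - m) := by
        apply Finset.sum_le_sum
        intro p _
        rw [← Finset.card_filter]
        by_cases hp : Function.Injective p
        · have hsub : (Finset.univ.filter
              (fun c : Sym2 V → Fin t => Function.Injective p ∧ ∀ j, c (cycEdge p j) = i))
              ⊆ Finset.univ.filter
              (fun c : Sym2 V → Fin t => ∀ e ∈ Finset.univ.image (cycEdge p), c e = i) := by
            intro c hc
            simp only [Finset.mem_filter, Finset.mem_univ, true_and] at hc ⊢
            intro e he
            obtain ⟨j, -, rfl⟩ := Finset.mem_image.mp he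
            exact hc.2 j
          have hF : (Finset.univ.image (cycEdge p)).card = m := by
            rw [Finset.card_image_of_injective _ (cycEdge_inj hm hp), Finset.card_univ,
              Fintype.card_fin]
          calc _ ≤ _ := Finset.card_le_card hsub
            _ ≤ Fintype.card (Fin t) ^ (Fintype.card (Sym2 V)
                  - (Finset.univ.image (cycEdge p)).card) := card_prescribed _ i
            _ = t ^ (Fintype.card (Sym2 V) - m) := by rw [hF, Fintype.card_fin]
        · have : (Finset.univ.filter
              (fun c : Sym2 V → Fin t => Function.Injective p ∧ ∀ j, c (cycEdge p j) = i))
              = ∅ := by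
            apply Finset.filter_false_of_mem
            intro c _ hcon
            exact hp hcon.1
          simp [this]
    _ = Fintype.card V ^ m * t ^ (Fintype.card (Sym2 V) - m) := by
        rw [Finset.sum_const, Finset.card_univ, Fintype.card_fun, Fintype.card_fin, smul_eq_mul]

end GirthDecompAux

set_option linter.unusedSectionVars false

namespace GirthDecompAux

variable {G : SimpleGraph V}

lemma support_getElem_eq_getVert {u v : V} (w : G.Walk u v) (i : ℕ)
    (h : i < w.support.length) : w.support[i] = w.getVert i := by
  induction w generalizing i with
  | nil =>
    simp only [SimpleGraph.Walk.support_nil, List.length_singleton] at h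
    interval_cases i
    simp
  | cons hadj q ih =>
    cases i with
    | zero => simp
    | succ i =>
      have h' : i < q.support.length := by
        simp only [SimpleGraph.Walk.support_cons, List.length_cons] at h; omega
      simp only [SimpleGraph.Walk.support_cons, List.getElem_cons_succ,
        SimpleGraph.Walk.getVert_cons_succ]
      exact ih i h'

/-- from a cycle of length `L` we extract an injective `Fin L`-tuple whose cyclic
edges are all edges of the graph. -/
lemma cycle_tuple {x : V} (w : G.Walk x x) (hw : w.IsCycle) :
    ∃ p : Fin w.length → V, Function.Injective p ∧
      (∀ j, (cycEdge p j) ∈ G.edgeSet) ∧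
      (∀ j, p j = w.getVert (j.val + 1)) := by
  classical
  have hL3 : 3 ≤ w.length := hw.three_le_length
  have hsl : w.support.length = w.length + 1 := by simp [SimpleGraph.Walk.length_support]
  have htl : w.support.tail.length = w.length := by simp [List.length_tail, hsl]
  refine ⟨fun j => w.getVert (j.val + 1), ?_, ?_, fun j => rfl⟩
  · intro a b hab
    have ha : (a : ℕ) + 1 < w.support.length := by omega
    have hb : (b : ℕ) + 1 < w.support.length := by omega
    have ha' : (a : ℕ) < w.support.tail.length := by omega
    have hb' : (b : ℕ) < w.support.tail.length := by omega
    have e1 : w.support.tail[(a : ℕ)] = w.support.tail[(b : ℕ)] := by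
      rw [List.getElem_tail, List.getElem_tail,
        support_getElem_eq_getVert _ _ ha, support_getElem_eq_getVert _ _ hb]
      exact hab
    have hinj := List.nodup_iff_injective_getElem.mp hw.support_nodup
    have h2 := hinj (a₁ := ⟨(a : ℕ), ha'⟩) (a₂ := ⟨(b : ℕ), hb'⟩) e1
    apply Fin.ext
    simpa using congrArg Fin.val h2
  · intro j
    by_cases hlt : (j : ℕ) + 1 < w.length
    · have hmod : ((j : ℕ) + 1) % w.length = (j : ℕ) + 1 := Nat.mod_eq_of_lt hlt
      have hadj := w.adj_getVert_succ (i := (j : ℕ) + 1) hlt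
      simp only [cycEdge, hmod, SimpleGraph.mem_edgeSet]
      exact hadj
    · have heq : (j : ℕ) + 1 = w.length := by have := j.isLt; omega
      have hmod : ((j : ℕ) + 1) % w.length = 0 := by rw [heq]; exact Nat.mod_self _
      have h0 : w.getVert ((j : ℕ) + 1) = x := by rw [heq]; exact w.getVert_length
      have hadj := w.adj_getVert_succ (i := 0) (by omega)
      simp only [cycEdge, hmod, SimpleGraph.mem_edgeSet, h0]
      simpa using hadj

end GirthDecompAux

namespace GirthDecompAux

lemma log_lt_self' {x : ℝ} (hx : 0 < x) : Real.log x < x := by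
  rcases le_or_gt x 1 with h | h
  · exact lt_of_le_of_lt (Real.log_nonpos hx.le h) (by linarith [Real.log_nonpos hx.le h, hx])
  · exact (Real.log_lt_sub_one_of_pos hx h.ne').trans_le (by linarith)

lemma numeric (n k : ℕ) (hn : 3000 ≤ n) (hk : 0 < k)
    (hkb : (k : ℝ) ≤ (1/100) * Real.log n / Real.log (Real.log n)) :
    2 * k ≤ n ∧ (((4 * k : ℕ) : ℝ)) ^ (2 * (2 * k + 1)) ≤ (n : ℝ) := by
  have hn0 : (0 : ℝ) < n := by positivity
  have hnR : (3000 : ℝ) ≤ (n : ℝ) := by exact_mod_cast hn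
  set L := Real.log n with hLdef
  set A := Real.log L with hAdef
  have hexp1 : Real.exp 1 < 2.7182818286 := Real.exp_one_lt_d9
  have hexp1' : (2.7182818283 : ℝ) < Real.exp 1 := Real.exp_one_gt_d9
  have hL8 : (8 : ℝ) ≤ L := by
    rw [hLdef, Real.le_log_iff_exp_le hn0]
    have : Real.exp (8 : ℕ) ≤ (2.7182818286 : ℝ) ^ (8:ℕ) := by
      rw [← Real.exp_one_pow]
      exact pow_le_pow_left₀ (Real.exp_pos 1).le hexp1.le 8
    calc Real.exp 8 = Real.exp (8:ℕ) := by norm_num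
      _ ≤ (2.7182818286 : ℝ) ^ (8:ℕ) := this
      _ ≤ 3000 := by norm_num
      _ ≤ (n : ℝ) := hnR
  have hL0 : (0 : ℝ) < L := by linarith
  have hA2 : (2 : ℝ) ≤ A := by
    have h8 : (2 : ℝ) ≤ Real.log 8 := by
      rw [Real.le_log_iff_exp_le (by norm_num)]
      have : Real.exp (2 : ℕ) ≤ (2.7182818286 : ℝ) ^ (2 : ℕ) := by
        rw [← Real.exp_one_pow]
        exact pow_le_pow_left₀ (Real.exp_pos 1).le hexp1.le 2
      calc Real.exp 2 = Real.exp (2:ℕ) := by norm_num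
        _ ≤ (2.7182818286 : ℝ) ^ (2:ℕ) := this
        _ ≤ 8 := by norm_num
    exact h8.trans (Real.log_le_log (by norm_num) hL8)
  have hA0 : (0 : ℝ) < A := by linarith
  have hkA : (k : ℝ) * A ≤ L / 100 := by
    rw [le_div_iff₀ hA0] at hkb
    calc (k:ℝ) * A ≤ 1/100 * L := hkb
      _ = L / 100 := by ring
  have hk1 : (1 : ℝ) ≤ (k : ℝ) := by exact_mod_cast hk
  have hkL : (k : ℝ) ≤ L / 200 := by nlinarith
  have hlogk : Real.log k ≤ A := by
    rw [hAdef]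
    exact Real.log_le_log (by positivity) (by linarith)
  have hlog4 : Real.log 4 ≤ 2 := by
    rw [Real.log_le_iff_le_exp (by norm_num)]
    have : (2.7182818283 : ℝ) ^ (2:ℕ) ≤ Real.exp (2 : ℕ) := by
      rw [← Real.exp_one_pow]
      exact pow_le_pow_left₀ (by norm_num) hexp1'.le 2
    calc (4:ℝ) ≤ (2.7182818283 : ℝ) ^ (2:ℕ) := by norm_num
      _ ≤ Real.exp (2:ℕ) := this
      _ = Real.exp 2 := by norm_num
  have hlog4k : Real.log ((4 * k : ℕ) : ℝ) ≤ 2 * A := by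
    have : ((4 * k : ℕ) : ℝ) = 4 * (k : ℝ) := by push_cast; ring
    rw [this, Real.log_mul (by norm_num) (by positivity)]
    linarith
  have hlog4k0 : 0 ≤ Real.log ((4 * k : ℕ) : ℝ) := by
    apply Real.log_nonneg
    have : (1:ℝ) ≤ (4 : ℝ) * (k:ℝ) := by nlinarith
    push_cast
    linarith
  have hmain : (2 * (2 * k + 1) : ℕ) * Real.log ((4 * k : ℕ) : ℝ) ≤ L := by
    have h6k : ((2 * (2 * k + 1) : ℕ) : ℝ) ≤ 6 * (k : ℝ) := by push_cast; nlinarith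
    calc ((2 * (2 * k + 1) : ℕ) : ℝ) * Real.log ((4 * k : ℕ) : ℝ)
        ≤ 6 * (k : ℝ) * Real.log ((4 * k : ℕ) : ℝ) := by
          apply mul_le_mul_of_nonneg_right h6k hlog4k0
      _ ≤ 6 * (k : ℝ) * (2 * A) := by
          apply mul_le_mul_of_nonneg_left hlog4k (by positivity)
      _ = 12 * ((k:ℝ) * A) := by ring
      _ ≤ 12 * (L / 100) := by linarith
      _ ≤ L := by linarith
  constructor
  · have : (2 * k : ℝ) < (n : ℝ) := by
      have hLn : L < n := log_lt_self' hn0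
      push_cast
      nlinarith
    exact_mod_cast this.le
  · have hX0 : (0:ℝ) < ((4 * k : ℕ) : ℝ) ^ (2 * (2 * k + 1)) := by positivity
    rw [← Real.log_le_log_iff hX0 hn0, Real.log_pow]
    exact hmain

end GirthDecompAux

namespace GirthDecompAux

def colGraph (n t : ℕ) (c : Sym2 (Fin n ⊕ Fin n) → Fin t)
    (D : Finset (Sym2 (Fin n ⊕ Fin n))) (i : Fin t) : SimpleGraph (Fin n ⊕ Fin n) where
  Adj a b := (completeBipartiteGraph (Fin n) (Fin n)).Adj a b ∧ c s(a, b) = i ∧ s(a, b) ∉ D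
  symm := by
    constructor
    intro a b h
    refine ⟨(completeBipartiteGraph (Fin n) (Fin n)).adj_symm h.1, ?_, ?_⟩
    · rw [Sym2.eq_swap]; exact h.2.1
    · rw [Sym2.eq_swap]; exact h.2.2
  loopless := by
    constructor
    intro a h
    exact (completeBipartiteGraph (Fin n) (Fin n)).irrefl h.1

instance (n t : ℕ) (c : Sym2 (Fin n ⊕ Fin n) → Fin t)
    (D : Finset (Sym2 (Fin n ⊕ Fin n))) (i : Fin t) :
    DecidableRel (colGraph n t c D i).Adj := fun a b =>
  inferInstanceAs (Decidable (((a.isLeft ∧ b.isRight) ∨ (a.isRight ∧ b.isLeft)) ∧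
    c s(a, b) = i ∧ s(a, b) ∉ D))

example (n t : ℕ) (c : Sym2 (Fin n ⊕ Fin n) → Fin t)
    (D : Finset (Sym2 (Fin n ⊕ Fin n))) (i : Fin t) : True := by
  have := (colGraph n t c D i).edgeFinset
  trivial

end GirthDecompAux


open GirthDecompAux in
/-- Lemma 3: there is `α > 0` such that for `k ≤ α log n / log log n` and
`t = ⌊n/k⌋`, one can find edge-disjoint subgraphs `G₁, …, G_t` of `K_{n,n}` with no
cycle of length at most `2k` and `Σᵢ |E(Gᵢ)| ≥ (1 - ε) n²`. -/
theorem exists_edge_disjoint_large_girth_decomposition :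
    ∃ α : ℝ, 0 < α ∧ ∀ ε : ℝ, 0 < ε → ∃ N : ℕ, ∀ n : ℕ, N ≤ n → ∀ k : ℕ, 0 < k →
      (k : ℝ) ≤ α * Real.log n / Real.log (Real.log n) →
      ∃ G : Fin (n / k) → SimpleGraph (Fin n ⊕ Fin n),
        (∀ i, G i ≤ completeBipartiteGraph (Fin n) (Fin n)) ∧
        (∀ i j, i ≠ j → Disjoint ((G i).edgeSet) ((G j).edgeSet)) ∧
        (∀ i, ∀ x, ∀ w : (G i).Walk x x, w.IsCycle → ¬ w.length ≤ 2 * k) ∧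
        (1 - ε) * (n : ℝ) ^ 2 ≤ ∑ i : Fin (n / k), ((G i).edgeSet.ncard : ℝ) := by
  classical
  refine ⟨1/100, by norm_num, ?_⟩
  intro ε hε
  refine ⟨max 3000 ⌈ε⁻¹ ^ 2⌉₊, ?_⟩
  intro n hn k hk hkb
  have hn3000 : 3000 ≤ n := le_trans (le_max_left _ _) hn
  have hεn : ε⁻¹ ^ 2 ≤ (n : ℝ) := by
    have h1 : (⌈ε⁻¹ ^ 2⌉₊ : ℝ) ≤ (n : ℝ) := by
      exact_mod_cast le_trans (le_max_right 3000 _) hn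
    exact (Nat.le_ceil _).trans h1
  obtain ⟨h2kn, hpow⟩ := numeric n k hn3000 hk hkb
  have hkn : k ≤ n := by omega
  set t := n / k with htdef
  have ht1 : 1 ≤ t := (Nat.one_le_div_iff hk).mpr hkn
  have htn : t ≤ n := Nat.div_le_self n k
  have hn2kt : n ≤ 2 * (k * t) := by
    have h1 : n % k < k := Nat.mod_lt _ hk
    have h2 : k * t + n % k = n := by rw [htdef]; exact Nat.div_add_mod n k
    have h3 : k ≤ k * t := Nat.le_mul_of_pos_right k ht1
    omega
  set V' := (Fin n ⊕ Fin n) with hV'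
  have hcard2n : Fintype.card V' = 2 * n := by
    simp [hV', Fintype.card_sum]; omega
  set M := Fintype.card (Sym2 V') with hMdef
  have hM2k : 2 * k ≤ M := by
    rw [hMdef, Sym2.card, hcard2n, Nat.choose_two_right]
    have e1 : 2 * n + 1 - 1 = 2 * n := by omega
    rw [e1, show (2*n+1) * (2*n) = ((2*n+1)*n) * 2 by ring,
      Nat.mul_div_cancel _ (by norm_num : 0 < 2)]
    exact le_trans h2kn (Nat.le_mul_of_pos_left n (by omega))
  -- choose a good colouring
  have hne : Nonempty (Sym2 V' → Fin t) := ⟨fun _ => ⟨0, ht1⟩⟩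
  set B := (4*k)^(2*k+1) * t with hBdef
  have hsum : ∑ c : Sym2 V' → Fin t,
      (∑ m ∈ Finset.Icc 3 (2*k), ∑ i : Fin t, (BadSet c m i).card)
      ≤ ∑ _c : Sym2 V' → Fin t, B := by
    rw [Finset.sum_comm]
    have hstep : ∀ m ∈ Finset.Icc 3 (2*k),
        ∑ c : Sym2 V' → Fin t, ∑ i : Fin t, (BadSet c m i).card ≤ (4*k)^m * (t * t^M) := by
      intro m hm
      rw [Finset.mem_Icc] at hm
      rw [Finset.sum_comm]
      have hone : ∀ i : Fin t, ∑ c : Sym2 V' → Fin t, (BadSet c m i).card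
          ≤ (4*k)^m * t^M := by
        intro i
        calc ∑ c : Sym2 V' → Fin t, (BadSet c m i).card
            ≤ Fintype.card V' ^ m * t ^ (M - m) := sum_badset_card hm.1 i
          _ ≤ (4 * k * t) ^ m * t ^ (M - m) := by
              have h24 : Fintype.card V' ≤ 4 * k * t := by
                rw [hcard2n, show 4 * k * t = 2 * (2 * (k * t)) by ring]; omega
              exact Nat.mul_le_mul_right _ (Nat.pow_le_pow_left h24 m)
          _ = (4*k)^m * (t^m * t^(M - m)) := by rw [mul_pow]; ring
          _ = (4*k)^m * t^M := by
              rw [← pow_add, Nat.add_sub_cancel' (hm.2.trans hM2k)]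
      calc ∑ i : Fin t, ∑ c : Sym2 V' → Fin t, (BadSet c m i).card
          ≤ ∑ _i : Fin t, (4*k)^m * t^M := Finset.sum_le_sum (fun i _ => hone i)
        _ = t * ((4*k)^m * t^M) := by rw [Finset.sum_const, Finset.card_univ,
            Fintype.card_fin, smul_eq_mul]
        _ = (4*k)^m * (t * t^M) := by ring
    calc ∑ m ∈ Finset.Icc 3 (2*k), ∑ c : Sym2 V' → Fin t, ∑ i : Fin t, (BadSet c m i).card
        ≤ ∑ m ∈ Finset.Icc 3 (2*k), (4*k)^m * (t * t^M) := Finset.sum_le_sum hstep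
      _ ≤ ∑ _m ∈ Finset.Icc 3 (2*k), (4*k)^(2*k) * (t * t^M) := by
          apply Finset.sum_le_sum
          intro m hm
          rw [Finset.mem_Icc] at hm
          apply Nat.mul_le_mul_right
          apply Nat.pow_le_pow_right (by omega) hm.2
      _ = (Finset.Icc 3 (2*k)).card * ((4*k)^(2*k) * (t * t^M)) := by
          rw [Finset.sum_const, smul_eq_mul]
      _ ≤ (4*k) * ((4*k)^(2*k) * (t * t^M)) := by
          apply Nat.mul_le_mul_right
          rw [Nat.card_Icc]
          omega
      _ = B * t^M := by rw [hBdef, pow_succ]; ring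
      _ = ∑ _c : Sym2 V' → Fin t, B := by
          rw [Finset.sum_const, Finset.card_univ, Fintype.card_fun, Fintype.card_fin,
            smul_eq_mul, mul_comm]
  obtain ⟨c, -, hc⟩ := Finset.exists_le_of_sum_le Finset.univ_nonempty hsum
  -- the deletion set
  set D : Finset (Sym2 V') := (Finset.Icc 3 (2*k)).biUnion (fun m =>
    Finset.univ.biUnion (fun i : Fin t =>
      if h : 0 < m then (BadSet c m i).image
        (fun p => s(p ⟨0, h⟩, p ⟨1 % m, Nat.mod_lt _ h⟩)) else ∅)) with hDdef
  have hDcard : D.card ≤ B := by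
    refine le_trans ?_ hc
    refine le_trans Finset.card_biUnion_le (Finset.sum_le_sum ?_)
    intro m _
    refine le_trans Finset.card_biUnion_le (Finset.sum_le_sum ?_)
    intro i _
    split
    · exact Finset.card_image_le
    · simp
  refine ⟨fun i => colGraph n t c D i, ?_, ?_, ?_, ?_⟩
  · intro i a b hab
    exact hab.1
  · intro i j hij
    rw [Set.disjoint_left]
    intro e hei hej
    revert hei hej
    induction e using Sym2.ind with
    | _ a b =>
      intro hei hej
      rw [SimpleGraph.mem_edgeSet] at hei hej
      exact hij (hei.2.1.symm.trans hej.2.1)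
  · intro i x w hcyc hlen
    obtain ⟨p, hpinj, hpedge, -⟩ := cycle_tuple w hcyc
    have hL3 : 3 ≤ w.length := hcyc.three_le_length
    have hmem : p ∈ BadSet c w.length i := by
      rw [BadSet, Finset.mem_filter]
      refine ⟨Finset.mem_univ _, hpinj, fun j => ?_⟩
      have hj := hpedge j
      rw [cycEdge, SimpleGraph.mem_edgeSet] at hj
      rw [cycEdge]
      exact hj.2.1
    have h0 : 0 < w.length := by omega
    have hD : s(p ⟨0, h0⟩, p ⟨1 % w.length, Nat.mod_lt _ h0⟩) ∈ D := by
      simp only [hDdef]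
      rw [Finset.mem_biUnion]
      refine ⟨w.length, Finset.mem_Icc.mpr ⟨hL3, hlen⟩, ?_⟩
      rw [Finset.mem_biUnion]
      refine ⟨i, Finset.mem_univ _, ?_⟩
      rw [dif_pos h0]
      exact Finset.mem_image.mpr ⟨p, hmem, rfl⟩
    have hed := hpedge ⟨0, h0⟩
    rw [cycEdge, SimpleGraph.mem_edgeSet] at hed
    exact hed.2.2 hD
  · -- edge count
    have hΦ : Function.Injective (fun q : Fin n × Fin n => (s(Sum.inl q.1, Sum.inr q.2) : Sym2 V')) := by
      rintro ⟨a1, a2⟩ ⟨b1, b2⟩ h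
      rcases Sym2.eq_iff.mp h with ⟨h1, h2⟩ | ⟨h1, h2⟩
      · exact Prod.ext (Sum.inl_injective h1) (Sum.inr_injective h2)
      · exact absurd h1 Sum.inl_ne_inr
    set Φ : Fin n × Fin n → Sym2 V' := fun q => s(Sum.inl q.1, Sum.inr q.2) with hΦdef
    have himg : (Finset.univ.image Φ).card = n * n := by
      rw [Finset.card_image_of_injective _ hΦ, Finset.card_univ]
      simp [Fintype.card_prod]
    have hsub : (Finset.univ.image Φ) \ D ⊆
        Finset.univ.biUnion (fun i : Fin t => (colGraph n t c D i).edgeFinset) := by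
      intro e he
      rw [Finset.mem_sdiff] at he
      obtain ⟨q, -, rfl⟩ := Finset.mem_image.mp he.1
      refine Finset.mem_biUnion.mpr ⟨c (Φ q), Finset.mem_univ _, ?_⟩
      rw [SimpleGraph.mem_edgeFinset]
      rw [hΦdef, SimpleGraph.mem_edgeSet]
      refine ⟨?_, rfl, he.2⟩
      simp [completeBipartiteGraph]
    have hdisjF : ∀ i ∈ (Finset.univ : Finset (Fin t)), ∀ j ∈ Finset.univ, i ≠ j →
        Disjoint ((colGraph n t c D i).edgeFinset) ((colGraph n t c D j).edgeFinset) := by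
      intro i _ j _ hij
      rw [Finset.disjoint_left]
      intro e hei hej
      rw [SimpleGraph.mem_edgeFinset] at hei hej
      revert hei hej
      induction e using Sym2.ind with
      | _ a b =>
        intro hei hej
        rw [SimpleGraph.mem_edgeSet] at hei hej
        exact hij (hei.2.1.symm.trans hej.2.1)
    have hcount : n * n - D.card ≤ ∑ i : Fin t, (colGraph n t c D i).edgeFinset.card := by
      calc n * n - D.card = (Finset.univ.image Φ).card - D.card := by rw [himg]
        _ ≤ ((Finset.univ.image Φ) \ D).card := Finset.le_card_sdiff _ _
        _ ≤ (Finset.univ.biUnion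
              (fun i : Fin t => (colGraph n t c D i).edgeFinset)).card :=
            Finset.card_le_card hsub
        _ = ∑ i : Fin t, (colGraph n t c D i).edgeFinset.card := Finset.card_biUnion hdisjF
    have hNat : n * n ≤ (∑ i : Fin t, (colGraph n t c D i).edgeFinset.card) + D.card := by
      omega
    have hncard : ∀ i : Fin t, ((colGraph n t c D i).edgeSet.ncard : ℝ)
        = ((colGraph n t c D i).edgeFinset.card : ℝ) := by
      intro i
      rw [← SimpleGraph.coe_edgeFinset, Set.ncard_coe_finset]
    -- real arithmetic
    have hBreal : (B : ℝ) ≤ ε * (n : ℝ)^2 := by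
      have hx0 : (0:ℝ) ≤ ((4*k : ℕ) : ℝ)^(2*k+1) := by positivity
      have hsq : (((4*k : ℕ) : ℝ)^(2*k+1))^2 ≤ ((n:ℝ)) := by
        rw [← pow_mul]
        have : (2*k+1) * 2 = 2*(2*k+1) := by ring
        rw [this]
        exact hpow
      have hεn2 : (n : ℝ) ≤ (ε * n)^2 := by
        have h1 : (1:ℝ) ≤ ε^2 * n := by
          have h2 : ε⁻¹^2 ≤ (n:ℝ) := hεn
          have h3 : (0:ℝ) < ε^2 := by positivity
          calc (1:ℝ) = ε^2 * ε⁻¹^2 := by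
                field_simp
            _ ≤ ε^2 * n := by nlinarith
        calc (n:ℝ) = 1 * n := by ring
          _ ≤ (ε^2 * n) * n := by
              have hn0 : (0:ℝ) ≤ n := by positivity
              nlinarith
          _ = (ε * n)^2 := by ring
      have hxn : ((4*k : ℕ) : ℝ)^(2*k+1) ≤ ε * n := by
        have h1 : (((4*k : ℕ) : ℝ)^(2*k+1))^2 ≤ (ε * n)^2 := hsq.trans hεn2
        have h2 : (0:ℝ) ≤ ε * n := by positivity
        calc ((4*k : ℕ) : ℝ)^(2*k+1) = Real.sqrt ((((4*k : ℕ) : ℝ)^(2*k+1))^2) :=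
              (Real.sqrt_sq hx0).symm
          _ ≤ Real.sqrt ((ε*n)^2) := Real.sqrt_le_sqrt h1
          _ = ε * n := Real.sqrt_sq h2
      have htR : (t : ℝ) ≤ (n : ℝ) := by exact_mod_cast htn
      calc (B : ℝ) = ((4*k : ℕ) : ℝ)^(2*k+1) * (t : ℝ) := by
            rw [hBdef]; push_cast; ring
        _ ≤ (ε * n) * (n : ℝ) := by
            apply mul_le_mul hxn htR (by positivity) (by positivity)
        _ = ε * (n:ℝ)^2 := by ring
    have hDB : (D.card : ℝ) ≤ ε * (n:ℝ)^2 := le_trans (by exact_mod_cast hDcard) hBreal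
    have hNatR : ((n:ℝ) * n) ≤ (∑ i : Fin t, ((colGraph n t c D i).edgeFinset.card : ℝ))
        + (D.card : ℝ) := by exact_mod_cast hNat
    calc (1 - ε) * (n : ℝ)^2 = (n:ℝ) * n - ε * (n:ℝ)^2 := by ring
      _ ≤ ∑ i : Fin t, ((colGraph n t c D i).edgeFinset.card : ℝ) := by linarith
      _ = ∑ i : Fin t, ((colGraph n t c D i).edgeSet.ncard : ℝ) := by
          exact Finset.sum_congr rfl (fun i _ => (hncard i).symm)
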